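/- Let C₀ > 0 and let φ : (0,∞) → ℝ be C² with φ′(m) < 0 and |m φ″(m)| ≤ −C₀ φ′(m) for all m > 0. Then for all m₁, m₂ ∈ (0,∞): |m₁φ′(m₁) − m₂φ′(m₂)| ≤ (1 + C₀)|φ(m₁) − φ(m₂)|. Equivalently, the map w ↦ φ⁻¹(w)·φ′(φ⁻¹(w)), defined on the range of φ, is Lipschitz continuous with Lipschitz constant 1 + C₀. -/

import Mathlib

open Set Function

noncomputable section

/-- the one-dimensional Lipschitz lemma behind (HM2).  If
`φ' < 0` and `|mφ''(m)| ≤ −C₀φ'(m)` on `(0,∞)`, then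
`|m₁φ'(m₁) − m₂φ'(m₂)| ≤ (1+C₀)|φ(m₁) − φ(m₂)|`; equivalently
`w ↦ φ⁻¹(w)·φ'(φ⁻¹(w))` is `(1+C₀)`-Lipschitz on the range of `φ`. -/
theorem mphi_lipschitz (C₀ : ℝ) (hC₀ : 0 < C₀) (φ : ℝ → ℝ)
    (hφ : ContDiffOn ℝ 2 φ (Ioi 0))
    (hφ' : ∀ m : ℝ, 0 < m → deriv φ m < 0)
    (hφ'' : ∀ m : ℝ, 0 < m → |m * deriv (deriv φ) m| ≤ -(C₀ * deriv φ m)) :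
    (∀ m₁ m₂ : ℝ, 0 < m₁ → 0 < m₂ →
      |m₁ * deriv φ m₁ - m₂ * deriv φ m₂| ≤ (1 + C₀) * |φ m₁ - φ m₂|) ∧
    LipschitzOnWith (Real.toNNReal (1 + C₀))
      (fun w => invFunOn φ (Ioi 0) w * deriv φ (invFunOn φ (Ioi 0) w))
      (φ '' Ioi 0) := by
  have hopen : IsOpen (Ioi (0:ℝ)) := isOpen_Ioi
  have hφD : DifferentiableOn ℝ φ (Ioi 0) := hφ.differentiableOn (by norm_num)
  have hd1 : ContDiffOn ℝ 1 (deriv φ) (Ioi 0) :=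
    hφ.deriv_of_isOpen hopen (by norm_num)
  have hdD : DifferentiableOn ℝ (deriv φ) (Ioi 0) := hd1.differentiableOn (by norm_num)
  -- derivatives at points of Ioi 0
  have hφat : ∀ m : ℝ, 0 < m → HasDerivAt φ (deriv φ m) m := fun m hm =>
    ((hφD m hm).differentiableAt (hopen.mem_nhds hm)).hasDerivAt
  have hdat : ∀ m : ℝ, 0 < m → HasDerivAt (deriv φ) (deriv (deriv φ) m) m := fun m hm =>
    ((hdD m hm).differentiableAt (hopen.mem_nhds hm)).hasDerivAt
  have hgat : ∀ m : ℝ, 0 < m →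
      HasDerivAt (fun m => m * deriv φ m) (deriv φ m + m * deriv (deriv φ) m) m := by
    intro m hm
    have : HasDerivAt (fun m => m * deriv φ m) (1 * deriv φ m + m * deriv (deriv φ) m) m :=
      (hasDerivAt_id m).mul (hdat m hm)
    simpa [one_mul] using this
  -- bound on the derivative of g
  have key : ∀ m : ℝ, 0 < m →
      |deriv φ m + m * deriv (deriv φ) m| ≤ (1 + C₀) * (-(deriv φ m)) := by
    intro m hm
    have h1 := hφ'' m hm
    have h2 := (hφ' m hm).le
    calc |deriv φ m + m * deriv (deriv φ) m|
        ≤ |deriv φ m| + |m * deriv (deriv φ) m| := abs_add_le _ _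
      _ ≤ (-(deriv φ m)) + (-(C₀ * deriv φ m)) := by
          rw [abs_of_nonpos h2]; linarith
      _ = (1 + C₀) * (-(deriv φ m)) := by ring
  -- continuity of F, G on Ioi 0
  have hgdiff : DifferentiableOn ℝ (fun m => m * deriv φ m) (Ioi 0) := fun m hm =>
    ((hgat m hm).differentiableAt).differentiableWithinAt
  have hmain : ∀ m₁ m₂ : ℝ, 0 < m₁ → 0 < m₂ →
      |m₁ * deriv φ m₁ - m₂ * deriv φ m₂| ≤ (1 + C₀) * |φ m₁ - φ m₂| := by
    -- F = g + (1+C₀)φ is antitone, G = g - (1+C₀)φ is monotone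
    have hF : AntitoneOn (fun m => m * deriv φ m + (1 + C₀) * φ m) (Ioi 0) := by
      apply antitoneOn_of_deriv_nonpos (convex_Ioi 0)
      · exact (hgdiff.continuousOn.add (hφD.continuousOn.const_smul (1 + C₀)))
      · rw [hopen.interior_eq]
        exact hgdiff.add (hφD.const_smul (1 + C₀))
      · rw [hopen.interior_eq]
        intro m hm
        have hd : HasDerivAt (fun m => m * deriv φ m + (1 + C₀) * φ m)
            ((deriv φ m + m * deriv (deriv φ) m) + (1 + C₀) * deriv φ m) m :=
          (hgat m hm).add ((hφat m hm).const_mul (1 + C₀))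
        rw [hd.deriv]
        have hk := key m hm
        have h := le_abs_self (deriv φ m + m * deriv (deriv φ) m)
        have hr : (1 + C₀) * (-(deriv φ m)) = -((1 + C₀) * deriv φ m) := by ring
        linarith
    have hG : MonotoneOn (fun m => m * deriv φ m - (1 + C₀) * φ m) (Ioi 0) := by
      apply monotoneOn_of_deriv_nonneg (convex_Ioi 0)
      · exact (hgdiff.continuousOn.sub (hφD.continuousOn.const_smul (1 + C₀)))
      · rw [hopen.interior_eq]
        exact hgdiff.sub (hφD.const_smul (1 + C₀))
      · rw [hopen.interior_eq]
        intro m hm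
        have hd : HasDerivAt (fun m => m * deriv φ m - (1 + C₀) * φ m)
            ((deriv φ m + m * deriv (deriv φ) m) - (1 + C₀) * deriv φ m) m :=
          (hgat m hm).sub ((hφat m hm).const_mul (1 + C₀))
        rw [hd.deriv]
        have hk := key m hm
        have h := neg_abs_le (deriv φ m + m * deriv (deriv φ) m)
        have hr : (1 + C₀) * (-(deriv φ m)) = -((1 + C₀) * deriv φ m) := by ring
        linarith
    have hφanti : AntitoneOn φ (Ioi 0) := by
      apply antitoneOn_of_deriv_nonpos (convex_Ioi 0) hφD.continuousOn
      · rw [hopen.interior_eq]; exact hφD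
      · rw [hopen.interior_eq]; exact fun m hm => (hφ' m hm).le
    intro m₁ m₂ hm₁ hm₂
    rcases le_total m₁ m₂ with h | h
    · have hFle := hF (mem_Ioi.mpr hm₁) (mem_Ioi.mpr hm₂) h
      have hGle := hG (mem_Ioi.mpr hm₁) (mem_Ioi.mpr hm₂) h
      have hφle : φ m₂ ≤ φ m₁ := hφanti (mem_Ioi.mpr hm₁) (mem_Ioi.mpr hm₂) h
      simp only at hFle hGle
      rw [abs_of_nonneg (by linarith : (0:ℝ) ≤ φ m₁ - φ m₂), abs_le]
      constructor <;> linarith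
    · have hFle := hF (mem_Ioi.mpr hm₂) (mem_Ioi.mpr hm₁) h
      have hGle := hG (mem_Ioi.mpr hm₂) (mem_Ioi.mpr hm₁) h
      have hφle : φ m₁ ≤ φ m₂ := hφanti (mem_Ioi.mpr hm₂) (mem_Ioi.mpr hm₁) h
      simp only at hFle hGle
      rw [abs_sub_comm, abs_sub_comm (φ m₁), abs_of_nonneg (by linarith : (0:ℝ) ≤ φ m₂ - φ m₁), abs_le]
      constructor <;> linarith
  refine ⟨hmain, ?_⟩
  apply LipschitzOnWith.of_dist_le_mul
  intro w₁ hw₁ w₂ hw₂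
  have h₁ : invFunOn φ (Ioi 0) w₁ ∈ Ioi 0 ∧ φ (invFunOn φ (Ioi 0) w₁) = w₁ := by
    obtain ⟨m, hm, hφm⟩ := hw₁
    exact ⟨invFunOn_mem ⟨m, hm, hφm⟩, invFunOn_eq ⟨m, hm, hφm⟩⟩
  have h₂ : invFunOn φ (Ioi 0) w₂ ∈ Ioi 0 ∧ φ (invFunOn φ (Ioi 0) w₂) = w₂ := by
    obtain ⟨m, hm, hφm⟩ := hw₂
    exact ⟨invFunOn_mem ⟨m, hm, hφm⟩, invFunOn_eq ⟨m, hm, hφm⟩⟩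
  have := hmain _ _ (mem_Ioi.mp h₁.1) (mem_Ioi.mp h₂.1)
  rw [h₁.2, h₂.2] at this
  rw [Real.dist_eq, Real.dist_eq, Real.coe_toNNReal _ (by linarith)]
  exact this
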